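/- Let F be a field of characteristic zero with a derivation δ, let K be a subfield of F closed under δ, and let η ∈ F be nonzero and algebraic over K of degree m ≥ 2, with F = K(η) and δη = p·η for some p ∈ K. Let c ∈ K and f ∈ F satisfy δf = c·η, and write f = Σ_{i=0}^{m−1} aᵢ·ηⁱ with a₀, …, a_{m−1} ∈ K (the unique representation of f in the K-basis 1, η, …, η^{m−1} of F). Then c = δa₁ + p·a₁; equivalently, δf = δ(a₁·η). -/

import Mathlib

/-- **Algebraic case in the proof of (2) ⟹ (3) of the Reduction Lemma** (Lemma 3.1).
Let `F` be a field of characteristic zero with a derivation `δ`, `K` a subfield closed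
under `δ`, and `η ≠ 0` algebraic over `K` of degree `m ≥ 2`, with `F = K(η)` and
`δη = p·η`, `p ∈ K`.  If `c ∈ K` and `f ∈ F` satisfy `δf = c·η` and
`f = Σ_{i<m} aᵢ·ηⁱ` with `aᵢ ∈ K`, then `c = δa₁ + p·a₁`. -/
theorem reduction_lemma_algebraic_case
    (F : Type*) [Field F] [CharZero F]
    (δ : F → F)
    (hadd : ∀ a b : F, δ (a + b) = δ a + δ b)
    (hmul : ∀ a b : F, δ (a * b) = a * δ b + δ a * b)
    (K : Subfield F)
    (hKδ : ∀ a ∈ K, δ a ∈ K)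
    (η : F) (hη : η ≠ 0)
    (m : ℕ) (hm : 2 ≤ m)
    (halg : IsIntegral K η)
    (hdeg : (minpoly K η).natDegree = m)
    (hgen : Subfield.closure (insert η (K : Set F)) = ⊤)
    (p : F) (hp : p ∈ K) (hδη : δ η = p * η)
    (c : F) (hc : c ∈ K)
    (f : F) (hf : δ f = c * η)
    (a : ℕ → F) (haK : ∀ i < m, a i ∈ K)
    (hrep : f = ∑ i ∈ Finset.range m, a i * η ^ i) :
    c = δ (a 1) + p * a 1 := by
  have hzero : δ 0 = 0 := by
    have := hadd 0 0
    simpa using this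
  have hone : δ 1 = 0 := by
    have := hmul 1 1
    simp at this
    exact this
  have hsum : ∀ (s : Finset ℕ) (g : ℕ → F),
      δ (∑ i ∈ s, g i) = ∑ i ∈ s, δ (g i) := by
    intro s g
    induction s using Finset.induction with
    | empty => simpa using hzero
    | insert _ _ hx ih =>
      rw [Finset.sum_insert hx, hadd, ih, Finset.sum_insert hx]
  have hpow : ∀ i : ℕ, δ (η ^ i) = (i : F) * p * η ^ i := by
    intro i
    induction i with
    | zero => simpa using hone
    | succ n ih =>
      rw [pow_succ, hmul, hδη, ih]
      push_cast
      ring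
  have hli : LinearIndependent K fun i : Fin m => η ^ (i : ℕ) := by
    rw [← hdeg]
    exact linearIndependent_pow η
  -- coefficient function
  have hNK : ∀ n : ℕ, (n : F) ∈ K := fun n => by
    exact_mod_cast natCast_mem K n
  set g : Fin m → K := fun i =>
    ⟨δ (a i) + (i : ℕ) * p * a i - (if (i : ℕ) = 1 then c else 0), by
      refine sub_mem (add_mem (hKδ _ (haK i i.2)) (mul_mem (mul_mem (hNK i) hp) (haK i i.2))) ?_
      split
      · exact hc
      · exact zero_mem K⟩ with hg
  have key : ∑ i : Fin m, g i • η ^ (i : ℕ) = 0 := by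
    have hδf : δ f = ∑ i ∈ Finset.range m, (δ (a i) + (i : ℕ) * p * a i) * η ^ i := by
      rw [hrep, hsum]
      refine Finset.sum_congr rfl fun i _ => ?_
      rw [hmul, hpow]
      ring
    have hcη : c * η = ∑ i ∈ Finset.range m, (if i = 1 then c else 0) * η ^ i := by
      simp_rw [ite_mul, zero_mul]
      rw [Finset.sum_ite_eq' (Finset.range m) 1 (fun i => c * η ^ i)]
      simp [Finset.mem_range, lt_of_lt_of_le one_lt_two hm]
    have : ∑ i ∈ Finset.range m,
        ((δ (a i) + (i : ℕ) * p * a i) - (if i = 1 then c else 0)) * η ^ i = 0 := by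
      simp_rw [sub_mul, Finset.sum_sub_distrib]
      rw [← hδf, ← hcη, hf, sub_self]
    calc ∑ i : Fin m, g i • η ^ (i : ℕ)
        = ∑ i ∈ Finset.range m,
          ((δ (a i) + (i : ℕ) * p * a i) - (if i = 1 then c else 0)) * η ^ i := by
          rw [Finset.sum_range fun i =>
            ((δ (a i) + (i : ℕ) * p * a i) - (if i = 1 then c else 0)) * η ^ i]
          refine Finset.sum_congr rfl fun i _ => ?_
          simp [hg, Subfield.smul_def, sub_mul]
      _ = 0 := this
  have hg1 : g ⟨1, lt_of_lt_of_le one_lt_two hm⟩ = 0 :=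
    (Fintype.linearIndependent_iff.mp hli) g key ⟨1, lt_of_lt_of_le one_lt_two hm⟩
  have := congrArg Subtype.val hg1
  simp only [hg] at this
  simp only [Nat.cast_one, one_mul, if_pos rfl, if_true] at this
  rw [ZeroMemClass.coe_zero] at this
  linear_combination -this
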